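/- Let G be a left-invariantly ordered group, S a finite subset in good position (1_G ∈ S and 1_G is the maximum of S), A a finite alphabet, and T ⊆ A^S a family with k-uniform {1_G}-extensions. Let C be a finite subset of G and E = {g ∈ C : gS ⊄ C} its S-contour. Then every pattern P : E → A has exactly k^{|C|−|E|} T-legal extensions to C. -/

import Mathlib

open Pointwise

attribute [local instance] Classical.propDecidable

/-- The closure of a finite set `B`: intersection of all members of `𝒞` containing `B`. -/
def memClosure {G : Type*} (𝒞 : Set (Finset G)) (B : Finset G) : Set G :=
  {x | ∀ C ∈ 𝒞, B ⊆ C → x ∈ C}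

/-- A convexoid: `∅` is a member, every finite set is contained in some member, and the
corner addition property holds. -/
def IsConvexoid {G : Type*} (𝒞 : Set (Finset G)) : Prop :=
  (∅ : Finset G) ∈ 𝒞 ∧ (∀ B : Finset G, ∃ C ∈ 𝒞, B ⊆ C) ∧
    ∀ C ∈ 𝒞, ∀ D ∈ 𝒞, C ⊂ D → ∃ a ∈ D, a ∉ C ∧ insert a C ∈ 𝒞

/-- `S`-unique corner positioning: each lax corner of a convex set is covered by at most
one translate of `S` inside the set. -/
def SUCP {G : Type*} [Group G] (𝒞 : Set (Finset G)) (S : Finset G) : Prop :=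
  ∀ C ∈ 𝒞, ∀ a ∈ C, a ∉ memClosure 𝒞 (C.erase a) →
    ∀ g₁ g₂ : G, a ∈ g₁ • S → g₁ • S ⊆ C → a ∈ g₂ • S → g₂ • S ⊆ C → g₁ = g₂

/-- `T ⊆ A^S` has `k`-uniform extensions at `s₀ ∈ S`: however the other coordinates are
filled, exactly `k` values at `s₀` give a pattern in `T`. -/
def uniformExt {G : Type*} {A : Type*} (S : Finset G) (T : Set (S → A)) (s₀ : S)
    (k : ℕ) : Prop :=
  ∀ Q : S → A, {b : A | (fun s : S => if s = s₀ then b else Q s) ∈ T}.ncard = k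

/-- `s ∈ S` is a translated lax corner of `S` (w.r.t. `𝒞`). -/
def IsTranslatedLaxCorner {G : Type*} [Group G] (𝒞 : Set (Finset G)) (S : Finset G)
    (s : S) : Prop :=
  ∃ g : G, g * (s : G) ∉ memClosure 𝒞 ((g • S).erase (g * (s : G)))

/-- `T` is `k`-TEP: it has `k`-uniform extensions at every translated lax corner of `S`. -/
def IsTEP {G : Type*} [Group G] {A : Type*} (𝒞 : Set (Finset G)) (S : Finset G)
    (T : Set (S → A)) (k : ℕ) : Prop :=
  ∀ s : S, IsTranslatedLaxCorner 𝒞 S s → uniformExt S T s k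

/-- `x` is `T`-legal on `C`: every translate of `S` inside `C` carries a pattern of `T`. -/
def legalOn {G : Type*} [Group G] {A : Type*} (S : Finset G) (T : Set (S → A))
    (x : G → A) (C : Finset G) : Prop :=
  ∀ g : G, g • S ⊆ C → (fun s : S => x (g * (s : G))) ∈ T

/-- The SFT defined by the allowed patterns `T ⊆ A^S`. -/
def TEPX {G : Type*} [Group G] {A : Type*} (S : Finset G) (T : Set (S → A)) :
    Set (G → A) :=
  {x | ∀ g : G, (fun s : S => x (g * (s : G))) ∈ T}

section Aux

lemma smul_sub_iff {G : Type*} [Group G] [DecidableEq G] {g : G} {S C : Finset G} :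
    g • S ⊆ C ↔ ∀ s ∈ S, g * s ∈ C := by
  constructor
  · intro h s hs
    exact h (Finset.mem_smul_finset.mpr ⟨s, hs, by simp⟩)
  · intro h x hx
    obtain ⟨s, hs, rfl⟩ := Finset.mem_smul_finset.mp hx
    simpa using h s hs

lemma legalOn_iff {G : Type*} [Group G] {A : Type*} (S : Finset G) (T : Set (S → A))
    (x : G → A) (C : Finset G) :
    legalOn S T x C ↔
      ∀ g : G, (∀ s ∈ S, g * s ∈ C) → (fun s : S => x (g * (s : G))) ∈ T := by
  unfold legalOn
  constructor
  · intro h g hg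
    exact h g (smul_sub_iff.mpr hg)
  · intro h g hg
    exact h g (smul_sub_iff.mp hg)

lemma uniformExt_elim {G : Type*} {A : Type*} (S : Finset G) (T : Set (S → A)) (s₀ : S)
    (k : ℕ) {D : ∀ s : S, Decidable (s = s₀)} (Q : S → A)
    (hQ : {b : A | (fun s : S => @ite A (s = s₀) (D s) b (Q s)) ∈ T}.ncard = k)
    (f : A → S → A) (hf0 : ∀ b, f b s₀ = b)
    (hf1 : ∀ b, ∀ s : S, s ≠ s₀ → f b s = Q s) :
    {b : A | f b ∈ T}.ncard = k := by
  rw [← hQ]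
  congr 1
  ext b
  simp only [Set.mem_setOf_eq]
  have hfe : f b = fun s : S => @ite A (s = s₀) (D s) b (Q s) := by
    funext s
    by_cases hs : s = s₀
    · rw [if_pos hs, hs, hf0]
    · rw [if_neg hs, hf1 b s hs]
  rw [hfe]

private lemma card_glue {G : Type*} [Group G] (S C : Finset G)
    {instD : DecidableEq G} {instP : DecidablePred fun g : G => ¬ g • S ⊆ C} :
    C.card - (C.filter fun g : G => ¬ g • S ⊆ C).card
      = {g ∈ (C : Set G) | ∀ s ∈ S, g * s ∈ C}.ncard := by
  have h1 : {g ∈ (C : Set G) | ∀ s ∈ S, g * s ∈ C}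
      = ↑(C.filter fun g : G => g • S ⊆ C) := by
    ext g
    simp only [Set.mem_setOf_eq, Finset.coe_filter, Finset.mem_coe, smul_sub_iff]
  have h2 : (C.filter fun g : G => ¬ g • S ⊆ C)
      = C \ (C.filter fun g : G => g • S ⊆ C) := by
    ext g
    simp [Finset.mem_filter, Finset.mem_sdiff]
    tauto
  have h3 := Finset.card_filter_le C (fun g : G => g • S ⊆ C)
  rw [h1, Set.ncard_coe_finset, h2, Finset.card_sdiff_of_subset (Finset.filter_subset _ _)]
  omega

variable {G : Type*} [Group G] [LinearOrder G] [CovariantClass G G (· * ·) (· < ·)]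
  {A : Type*} [Fintype A]

noncomputable def extFun (C : Finset G) (P : G → A) (q : ((C : Set G)) → A) : G → A :=
  fun g => if h : g ∈ (C : Set G) then q ⟨g, h⟩ else P g

def GoodSet (S : Finset G) (T : Set (S → A)) (C : Finset G) (P : G → A) :
    Set (((C : Set G)) → A) :=
  {q | (∀ e, ∀ he : e ∈ C, ¬ (∀ s ∈ S, e * s ∈ C) →
      q ⟨e, Finset.mem_coe.mpr he⟩ = P e) ∧
    ∀ g : G, (∀ s ∈ S, g * s ∈ C) → (fun s : S => extFun C P q (g * (s : G))) ∈ T}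

private lemma fiber_count {α β : Type*} [Fintype α] [Fintype β] (f : α → β)
    (s : Set α) (t : Set β) {k : ℕ}
    (hm : ∀ a ∈ s, f a ∈ t) (h2 : ∀ b ∈ t, (s ∩ f ⁻¹' {b}).ncard = k) :
    s.ncard = k * t.ncard := by
  classical
  have hs : s.toFinset.card = ∑ b ∈ t.toFinset, (s.toFinset.filter fun a => f a = b).card := by
    apply Finset.card_eq_sum_card_fiberwise
    intro a ha
    simp only [Set.mem_toFinset, Finset.mem_coe] at ha ⊢
    exact hm a ha
  have hfib : ∀ b ∈ t.toFinset, (s.toFinset.filter fun a => f a = b).card = k := by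
    intro b hb
    rw [Set.mem_toFinset] at hb
    have he : (s.toFinset.filter fun a => f a = b) = (s ∩ f ⁻¹' {b}).toFinset := by
      ext a; simp [Set.mem_toFinset]
    rw [he, ← Set.ncard_eq_toFinset_card']
    exact h2 b hb
  rw [Set.ncard_eq_toFinset_card', Set.ncard_eq_toFinset_card', hs,
    Finset.sum_congr rfl hfib, Finset.sum_const, smul_eq_mul, mul_comm]

lemma good_count (S : Finset G) (h1 : (1:G) ∈ S) (hgood : ∀ s ∈ S, s ≤ 1)
    (T : Set (S → A)) (k : ℕ) (hext : uniformExt S T ⟨1, h1⟩ k) :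
    ∀ C : Finset G, ∀ P : G → A,
      (GoodSet S T C P).ncard = k ^ {g ∈ (C : Set G) | ∀ s ∈ S, g * s ∈ C}.ncard := by
  have hmul_le : ∀ g s : G, s ≤ 1 → g * s ≤ g := by
    intro g s hs
    rcases hs.lt_or_eq with h | h
    · have := mul_lt_mul_right h g
      rw [mul_one] at this
      exact this.le
    · simp [h]
  have hmul_lt : ∀ g s : G, s < 1 → g * s < g := by
    intro g s hs
    have := mul_lt_mul_right hs g
    rwa [mul_one] at this
  intro C
  induction C using Finset.strongInduction with
  | _ C ih =>
    intro P
    by_cases hF : {g ∈ (C : Set G) | ∀ s ∈ S, g * s ∈ C} = ∅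
    · -- base case: no translate of S fits inside C
      have hnog : ∀ g : G, ¬ (∀ s ∈ S, g * s ∈ C) := by
        intro g hfit
        have hgC : g ∈ C := by simpa using hfit 1 h1
        exact Set.eq_empty_iff_forall_notMem.mp hF g ⟨Finset.mem_coe.mpr hgC, hfit⟩
      have hone : GoodSet S T C P = {fun c : ((C : Set G)) => P ↑c} := by
        ext q
        constructor
        · rintro ⟨hq, -⟩
          funext c
          exact hq c.1 (Finset.mem_coe.mp c.2) (hnog c.1)
        · rintro rfl
          exact ⟨fun e he hne => rfl, fun g hfit => absurd hfit (hnog g)⟩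
      rw [hone, Set.ncard_singleton, hF]
      simp
    · -- inductive step
      set F := {g ∈ (C : Set G) | ∀ s ∈ S, g * s ∈ C} with hFdef
      have hFfin : F.Finite := C.finite_toSet.subset (Set.sep_subset _ _)
      have hFne : F.Nonempty := Set.nonempty_iff_ne_empty.mpr hF
      obtain ⟨g₀, hg₀mem', hmax'⟩ := hFfin.toFinset.exists_max_image id
        (by rwa [Set.Finite.toFinset_nonempty])
      have hg₀F : g₀ ∈ F := hFfin.mem_toFinset.mp hg₀mem'
      have hmaxF : ∀ g ∈ F, g ≤ g₀ := fun g hg => hmax' g (hFfin.mem_toFinset.mpr hg)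
      have hg₀C : g₀ ∈ C := Finset.mem_coe.mp hg₀F.1
      have hg₀fit : ∀ s ∈ S, g₀ * s ∈ C := hg₀F.2
      set C' := C.erase g₀ with hC'def
      have hC'sub : C' ⊆ C := Finset.erase_subset _ _
      have hssC' : C' ⊂ C := Finset.erase_ssubset hg₀C
      have hg₀mem : g₀ ∈ (C : Set G) := Finset.mem_coe.mpr hg₀C
      -- a smaller translate fitting in C fits in C'
      have hfitC' : ∀ g, g ∈ F → g ≠ g₀ → ∀ s ∈ S, g * s ∈ C' := by
        intro g hg hne s hs
        refine Finset.mem_erase.mpr ⟨?_, hg.2 s hs⟩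
        intro hgs
        have hle1 : g₀ ≤ g := hgs ▸ hmul_le g s (hgood s hs)
        exact hne (le_antisymm (hmaxF g hg) hle1)
      have hfitC : ∀ g, (∀ s ∈ S, g * s ∈ C') → ∀ s ∈ S, g * s ∈ C :=
        fun g h s hs => hC'sub (h s hs)
      have hgF : ∀ g, (∀ s ∈ S, g * s ∈ C) → g ∈ F := by
        intro g hfit
        exact ⟨Finset.mem_coe.mpr (by simpa using hfit 1 h1), hfit⟩
      have hF' : {g ∈ (C' : Set G) | ∀ s ∈ S, g * s ∈ C'} = F \ {g₀} := by
        ext g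
        constructor
        · rintro ⟨hgC', hfit⟩
          have hne : g ≠ g₀ := (Finset.mem_erase.mp (Finset.mem_coe.mp hgC')).1
          exact ⟨hgF g (hfitC g hfit), hne⟩
        · rintro ⟨hgFm, hne⟩
          have hne' : g ≠ g₀ := hne
          exact ⟨Finset.mem_coe.mpr (Finset.mem_erase.mpr
            ⟨hne', Finset.mem_coe.mp hgFm.1⟩), hfitC' g hgFm hne'⟩
      have hEiff : ∀ e, (e ∈ C' ∧ ¬ ∀ s ∈ S, e * s ∈ C') ↔ (e ∈ C ∧ ¬ ∀ s ∈ S, e * s ∈ C) := by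
        intro e
        constructor
        · rintro ⟨heC', hnfit⟩
          refine ⟨hC'sub heC', fun hfit => hnfit ?_⟩
          exact hfitC' e (hgF e hfit) (Finset.mem_erase.mp heC').1
        · rintro ⟨heC, hnfit⟩
          have hne : e ≠ g₀ := fun h => hnfit (h ▸ hg₀fit)
          exact ⟨Finset.mem_erase.mpr ⟨hne, heC⟩, fun hfit => hnfit (hfitC e hfit)⟩
      have hkey : ∀ s : S, (s : G) ≠ 1 → g₀ * (s : G) ∈ C' := by
        intro s hs
        have hlt : g₀ * (s : G) < g₀ := hmul_lt g₀ s (lt_of_le_of_ne (hgood s s.2) hs)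
        exact Finset.mem_erase.mpr ⟨ne_of_lt hlt, hg₀fit s s.2⟩
      -- restriction map
      set r : (((C : Set G)) → A) → (((C' : Set G)) → A) :=
        fun q c => q ⟨(c : G), Finset.mem_coe.mpr (hC'sub (Finset.mem_coe.mp c.2))⟩ with hrdef
      have hmapsr : ∀ q ∈ GoodSet S T C P, r q ∈ GoodSet S T C' P := by
        rintro q ⟨hqE, hqL⟩
        constructor
        · intro e he hnfit
          have hE := (hEiff e).mp ⟨he, hnfit⟩
          exact hqE e hE.1 hE.2
        · intro g hfit
          have hT := hqL g (hfitC g hfit)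
          have heq : (fun s : S => extFun C' P (r q) (g * (s : G))) =
              (fun s : S => extFun C P q (g * (s : G))) := by
            funext s
            have hmem' : g * (s : G) ∈ C' := hfit s s.2
            simp only [extFun]
            rw [dif_pos (Finset.mem_coe.mpr hmem'), dif_pos (Finset.mem_coe.mpr (hC'sub hmem'))]
          rw [heq]
          exact hT
      have hfiber : ∀ q' ∈ GoodSet S T C' P,
          (GoodSet S T C P ∩ r ⁻¹' {q'}).ncard = k := by
        rintro q' ⟨hq'E, hq'L⟩
        set Qb : S → A := fun s => extFun C' P q' (g₀ * (s : G)) with hQbdef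
        set qfun : A → (((C : Set G)) → A) := fun b c =>
          if hc : (c : G) = g₀ then b
          else q' ⟨(c : G),
            Finset.mem_coe.mpr (Finset.mem_erase.mpr ⟨hc, Finset.mem_coe.mp c.2⟩)⟩ with hqfundef
        set f : A → (S → A) := fun b s => extFun C P (qfun b) (g₀ * (s : G)) with hfdef
        have hf0 : ∀ b, f b ⟨1, h1⟩ = b := by
          intro b
          simp only [hfdef, extFun, mul_one]
          rw [dif_pos hg₀mem]
          simp only [hqfundef]
          simp
        have hf1 : ∀ b, ∀ s : S, s ≠ ⟨1, h1⟩ → f b s = Qb s := by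
          intro b s hs
          have hs1 : (s : G) ≠ 1 := fun h => hs (Subtype.ext h)
          have hmem' := hkey s hs1
          have hneg : g₀ * (s : G) ≠ g₀ := (Finset.mem_erase.mp hmem').1
          simp only [hfdef, hQbdef, extFun, hqfundef]
          rw [dif_pos (Finset.mem_coe.mpr (hC'sub hmem')), dif_neg hneg,
            dif_pos (Finset.mem_coe.mpr hmem')]
        have hMb : {b : A | f b ∈ T}.ncard = k :=
          uniformExt_elim S T ⟨1, h1⟩ k Qb (hext Qb) f hf0 hf1
        set f0 : (((C : Set G)) → A) → A := fun q => q ⟨g₀, hg₀mem⟩ with hf0def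
        have hqf : ∀ q ∈ GoodSet S T C P ∩ r ⁻¹' {q'}, qfun (f0 q) = q := by
          rintro q ⟨-, hqr⟩
          have hrq : r q = q' := hqr
          funext c
          by_cases hc : (c : G) = g₀
          · have hcc : c = ⟨g₀, hg₀mem⟩ := Subtype.ext hc
            simp only [hqfundef, hf0def]
            rw [dif_pos hc, hcc]
          · have hcC' : (c : G) ∈ C' := Finset.mem_erase.mpr ⟨hc, Finset.mem_coe.mp c.2⟩
            have e1 := congrFun hrq ⟨(c : G), Finset.mem_coe.mpr hcC'⟩
            simp only [hqfundef]
            rw [dif_neg hc]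
            exact e1.symm
        have hbij : Set.BijOn f0 (GoodSet S T C P ∩ r ⁻¹' {q'}) {b : A | f b ∈ T} := by
          refine ⟨?_, ?_, ?_⟩
          · -- MapsTo
            rintro q hq
            have hL := hq.1.2 g₀ hg₀fit
            show f (f0 q) ∈ T
            simp only [hfdef]
            rw [hqf q hq]
            exact hL
          · -- InjOn
            rintro q1 hq1 q2 hq2 hval
            rw [← hqf q1 hq1, ← hqf q2 hq2, hval]
          · -- SurjOn
            rintro b hb
            have hrq : r (qfun b) = q' := by
              funext c
              have hne : (c : G) ≠ g₀ := (Finset.mem_erase.mp (Finset.mem_coe.mp c.2)).1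
              show qfun b ⟨(c : G), _⟩ = q' c
              simp only [hqfundef]
              rw [dif_neg hne]
            have hqmem : qfun b ∈ GoodSet S T C P := by
              constructor
              · intro e heC hnfit
                have hne : e ≠ g₀ := fun h => hnfit (h ▸ hg₀fit)
                have hE' := (hEiff e).mpr ⟨heC, hnfit⟩
                have hPe := hq'E e (Finset.mem_coe.mp (Finset.mem_coe.mpr hE'.1)) hE'.2
                show qfun b ⟨e, _⟩ = P e
                simp only [hqfundef]
                rw [dif_neg hne]
                exact hPe
              · intro g hfit
                by_cases hgg : g = g₀
                · subst hgg
                  exact hb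
                · have hfit' : ∀ s ∈ S, g * s ∈ C' := hfitC' g (hgF g hfit) hgg
                  have hT := hq'L g hfit'
                  have heq : (fun s : S => extFun C P (qfun b) (g * (s : G))) =
                      (fun s : S => extFun C' P q' (g * (s : G))) := by
                    funext s
                    have hmem' : g * (s : G) ∈ C' := hfit' s s.2
                    have hneg : g * (s : G) ≠ g₀ := (Finset.mem_erase.mp hmem').1
                    simp only [extFun, hqfundef]
                    rw [dif_pos (Finset.mem_coe.mpr (hC'sub hmem')),
                      dif_pos (Finset.mem_coe.mpr hmem'), dif_neg hneg]
                  rw [heq]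
                  exact hT
            refine ⟨qfun b, ⟨hqmem, ?_⟩, ?_⟩
            · simp only [Set.mem_preimage, hrq, Set.mem_singleton_iff]
            · simp only [hf0def, hqfundef]
              simp
        calc (GoodSet S T C P ∩ r ⁻¹' {q'}).ncard
            = (f0 '' (GoodSet S T C P ∩ r ⁻¹' {q'})).ncard :=
              (Set.ncard_image_of_injOn hbij.injOn).symm
          _ = {b : A | f b ∈ T}.ncard := by rw [hbij.image_eq]
          _ = k := hMb
      have hmain := fiber_count r (GoodSet S T C P) (GoodSet S T C' P) hmapsr hfiber
      have hIH := ih C' hssC' P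
      rw [hF'] at hIH
      rw [hmain, hIH]
      have hFsplit : F = insert g₀ (F \ {g₀}) := by
        rw [Set.insert_diff_singleton, Set.insert_eq_self.mpr hg₀F]
      have hcard : F.ncard = (F \ {g₀}).ncard + 1 := by
        conv_lhs => rw [hFsplit]
        exact Set.ncard_insert_of_notMem (fun h => h.2 rfl)
          ((hFfin.subset Set.diff_subset))
      rw [hcard, pow_succ, mul_comm]

end Aux

/-- Contour counting: for a left-invariantly ordered group, a shape `S` in good position
(`1` is the maximum of `S`), and `T` with `k`-uniform extensions at `1`, every pattern on
the `S`-contour `E` of a finite set `C` has exactly `k^(|C|-|E|)` `T`-legal extensions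
to `C`. -/
theorem stmt12 {G : Type*} [Group G] [LinearOrder G]
    [CovariantClass G G (· * ·) (· < ·)]
    (S : Finset G) (h1 : (1 : G) ∈ S) (hgood : ∀ s ∈ S, s ≤ 1)
    {A : Type*} [Fintype A] (T : Set (S → A)) (k : ℕ)
    (hext : uniformExt S T ⟨(1 : G), h1⟩ k)
    (C : Finset G) (P : G → A) :
    {q : ((C : Set G)) → A | ∃ Q : G → A,
        (∀ e ∈ C.filter (fun g : G => ¬ g • S ⊆ C), Q e = P e) ∧
        legalOn S T Q C ∧ ∀ c : ((C : Set G)), Q (c : G) = q c}.ncard =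
      k ^ (C.card - (C.filter (fun g : G => ¬ g • S ⊆ C)).card) := by
  have hset : {q : ((C : Set G)) → A | ∃ Q : G → A,
      (∀ e ∈ C.filter (fun g : G => ¬ g • S ⊆ C), Q e = P e) ∧
      legalOn S T Q C ∧ ∀ c : ((C : Set G)), Q (c : G) = q c} = GoodSet S T C P := by
    ext q
    simp only [Set.mem_setOf_eq]
    constructor
    · rintro ⟨Q, hQE, hQL, hQq⟩
      rw [legalOn_iff] at hQL
      constructor
      · intro e he hnfit
        have hPe := hQE e (Finset.mem_filter.mpr
          ⟨he, fun hsub => hnfit (smul_sub_iff.mp hsub)⟩)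
        exact (hQq ⟨e, Finset.mem_coe.mpr he⟩).symm.trans hPe
      · intro g hfit
        have hT := hQL g hfit
        have heq : (fun s : S => extFun C P q (g * (s : G))) =
            (fun s : S => Q (g * (s : G))) := by
          funext s
          have hm : g * (s : G) ∈ C := hfit s s.2
          simp only [extFun]
          rw [dif_pos (Finset.mem_coe.mpr hm)]
          exact (hQq ⟨g * (s : G), Finset.mem_coe.mpr hm⟩).symm
        rw [heq]
        exact hT
    · rintro ⟨hqE, hqL⟩
      refine ⟨extFun C P q, ?_, ?_, ?_⟩
      · intro e he
        rw [Finset.mem_filter] at he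
        have hnfit : ¬ (∀ s ∈ S, e * s ∈ C) := fun hfit => he.2 (smul_sub_iff.mpr hfit)
        have := hqE e he.1 hnfit
        simp only [extFun]
        rw [dif_pos (Finset.mem_coe.mpr he.1)]
        exact this
      · rw [legalOn_iff]
        exact hqL
      · intro c
        simp only [extFun]
        rw [dif_pos c.2]
  rw [hset, good_count S h1 hgood T k hext C P, card_glue S C]
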